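/- Assume a random walk with absorption time τ and zero-crossing times T_0 = 0 < T_1 < T_2 < … satisfies: (i) P_x(τ ≥ T_k) ≤ c γ^k for all x ∈ ℝ, k ≥ 0, with c > 0, γ ∈ (0,1); (ii) the classical tail bound P_x(T_1 > n) ≤ c(|x|+1)n^{-1/2}; (iii) E_x[|H_k|; τ ≥ T_k] ≤ c γ^k (|x|+1) where H_k = S_{T_k}. Then there is a constant C > 0 such that P_x(τ > n) ≤ C(|x|+1)n^{-1/2} for all x ∈ ℝ and n ≥ 1. -/

import Mathlib

set_option maxHeartbeats 1000000

open MeasureTheory ENNReal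

private lemma half_le_floor {t : ℝ} (ht : 1 ≤ t) : t / 2 ≤ (⌊t⌋₊ : ℝ) := by
  rcases le_or_gt 2 t with h | h
  · have := Nat.sub_one_lt_floor t
    linarith
  · have h1 : (1 : ℕ) ≤ ⌊t⌋₊ := Nat.le_floor (by exact_mod_cast ht)
    have : (1 : ℝ) ≤ (⌊t⌋₊ : ℝ) := by exact_mod_cast h1
    linarith

private lemma geom_range_le {x : ℝ} (h0 : 0 ≤ x) (h1 : x < 1) (k : ℕ) :
    ∑ j ∈ Finset.range k, x ^ j ≤ 1 / (1 - x) := by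
  rw [Finset.range_eq_Ico]
  have := geom_sum_Ico_le_of_lt_one h0 h1 (m := 0) (n := k)
  simpa using this

/-- A priori persistence estimate (Lemma 3). Here `ptau x n = P_x(τ > n)`,
`pT1 y n = P_y(T₁ > n)`, and `μ x k` is the subprobability law of `H_k = S_{T_k}` under
`P_x` restricted to `{τ ≥ T_k}`. Assuming (C1), Eppel's tail bound, the moment bound of
Lemma 2, and the strong Markov decomposition, one gets `P_x(τ > n) ≤ C(|x|+1)n^{-1/2}`. -/
theorem stmt12 (ptau : ℝ → ℕ → ℝ≥0∞) (pT1 : ℝ → ℕ → ℝ≥0∞)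
    (μ : ℝ → ℕ → Measure ℝ)
    (c γ : ℝ) (hc : 0 < c) (hγ : 0 < γ) (hγ1 : γ < 1)
    (hptau1 : ∀ x n, ptau x n ≤ 1)
    (hC1 : ∀ x : ℝ, ∀ k : ℕ, μ x k Set.univ ≤ ENNReal.ofReal (c * γ ^ k))
    (hT1 : ∀ y : ℝ, ∀ n : ℕ, 1 ≤ n →
      pT1 y n ≤ ENNReal.ofReal (c * (|y| + 1) / Real.sqrt n))
    (hH : ∀ x : ℝ, ∀ k : ℕ,
      (∫⁻ y, ENNReal.ofReal (|y| + 1) ∂(μ x k)) ≤ ENNReal.ofReal (c * γ ^ k * (|x| + 1)))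
    (hdecomp : ∀ x : ℝ, ∀ n k : ℕ, ∀ m : ℕ → ℕ,
      (∑ j ∈ Finset.range k, m j) ≤ n →
      ptau x n ≤ μ x k Set.univ + ∑ j ∈ Finset.range k, ∫⁻ y, pT1 y (m j) ∂(μ x j)) :
    ∃ C : ℝ, 0 < C ∧ ∀ x : ℝ, ∀ n : ℕ, 1 ≤ n →
      ptau x n ≤ ENNReal.ofReal (C * (|x| + 1) / Real.sqrt n) := by
  have hγle1 : γ ≤ 1 := hγ1.le
  -- choose K ≥ 1 with γ^(2K) ≤ 1/2
  obtain ⟨K, hKpos, hK⟩ : ∃ K : ℕ, 0 < K ∧ γ ^ (2 * K) ≤ 1 / 2 := by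
    obtain ⟨K0, hK0⟩ := exists_pow_lt_of_lt_one (by norm_num : (0:ℝ) < 1/2) hγ1
    refine ⟨K0 + 1, Nat.succ_pos _, ?_⟩
    calc γ ^ (2 * (K0 + 1)) ≤ γ ^ K0 := pow_le_pow_of_le_one hγ.le hγle1 (by omega)
    _ ≤ 1 / 2 := hK0.le
  -- choose b with b^(4K) = 1/2
  obtain ⟨b, hb0, hb1, hb4K⟩ : ∃ b : ℝ, 0 < b ∧ b < 1 ∧ b ^ (4 * K) = 1 / 2 := by
    refine ⟨(1/2 : ℝ) ^ ((4 * K : ℝ)⁻¹), Real.rpow_pos_of_pos (by norm_num) _,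
      Real.rpow_lt_one (by norm_num) (by norm_num) (by positivity), ?_⟩
    rw [← Real.rpow_natCast ((1/2 : ℝ) ^ ((4 * K : ℝ)⁻¹)) (4 * K),
      ← Real.rpow_mul (by norm_num : (0:ℝ) ≤ 1/2),
      show ((4 * K : ℕ) : ℝ) = 4 * (K:ℝ) by push_cast; ring,
      inv_mul_cancel₀ (by positivity), Real.rpow_one]
  have h1b : 0 < 1 - b := by linarith
  have hγb2 : γ ≤ b ^ 2 := by
    have h2 : (b ^ 2) ^ (2 * K) = 1 / 2 := by
      rw [← pow_mul, show 2 * (2 * K) = 4 * K by ring]; exact hb4K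
    exact (pow_le_pow_iff_left₀ hγ.le (by positivity) (by omega)).mp (hK.trans_eq h2.symm)
  have hγbb : γ / b ≤ b := (div_le_iff₀ hb0).mpr (by nlinarith)
  -- constants
  obtain ⟨N0, hN0⟩ : ∃ N0 : ℕ, (4 / (1 - b) ^ 2 : ℝ) ≤ N0 := ⟨⌈(4 / (1 - b) ^ 2 : ℝ)⌉₊, Nat.le_ceil _⟩
  set A : ℝ := 2 * c ^ 2 / (Real.sqrt (1 - b) * (1 - b)) with hAdef
  have hA0 : 0 ≤ A := by positivity
  have hC0 : (0:ℝ) < Real.sqrt N0 + Real.sqrt 2 * c + A + 1 := by positivity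
  refine ⟨Real.sqrt N0 + Real.sqrt 2 * c + A + 1, hC0, ?_⟩
  intro x n hn1
  have hx1 : (1:ℝ) ≤ |x| + 1 := by have := abs_nonneg x; linarith
  have hn0 : (0:ℝ) < n := by exact_mod_cast hn1
  have hsn : 0 < Real.sqrt n := Real.sqrt_pos.mpr hn0
  rcases lt_or_ge n N0 with hsmall | hbig
  · -- small n
    refine (hptau1 x n).trans ?_
    rw [show (1:ℝ≥0∞) = ENNReal.ofReal 1 by simp]
    apply ENNReal.ofReal_le_ofReal
    rw [le_div_iff₀ hsn]
    have h1 : Real.sqrt n ≤ Real.sqrt N0 := Real.sqrt_le_sqrt (by exact_mod_cast hsmall.le)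
    have h2 : (Real.sqrt N0 + Real.sqrt 2 * c + A + 1) * 1 ≤
        (Real.sqrt N0 + Real.sqrt 2 * c + A + 1) * (|x| + 1) :=
      mul_le_mul_of_nonneg_left hx1 hC0.le
    have h3 : 0 ≤ Real.sqrt 2 * c := by positivity
    linarith
  · -- main case
    obtain ⟨L, hL1, hL2⟩ : ∃ L : ℕ, (2:ℝ) ^ L ≤ (n:ℝ) ∧ (n:ℝ) < 2 * 2 ^ L := by
      refine ⟨Nat.log 2 n, by exact_mod_cast Nat.pow_log_le_self 2 (by omega), ?_⟩
      have := Nat.lt_pow_succ_log_self (by norm_num : 1 < 2) n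
      have : (n:ℝ) < 2 ^ (Nat.log 2 n + 1) := by exact_mod_cast this
      calc (n:ℝ) < 2 ^ (Nat.log 2 n + 1) := this
      _ = 2 * 2 ^ Nat.log 2 n := by rw [pow_succ]; ring
    have h2L0 : (0:ℝ) < 2 ^ L := by positivity
    obtain ⟨k, hkdef⟩ : ∃ k : ℕ, k = K * L := ⟨_, rfl⟩
    -- key power bounds
    have hbk : 1 / Real.sqrt n ≤ b ^ (2 * k) := by
      have h4 : (1:ℝ) / n ≤ b ^ (2 * k) * b ^ (2 * k) := by
        have e : b ^ (2*k) * b ^ (2*k) = ((1:ℝ)/2) ^ L := by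
          rw [← pow_add, show 2*k + 2*k = (4*K)*L by rw [hkdef]; ring, pow_mul, hb4K]
        rw [e, div_pow, one_pow, one_div, one_div]
        exact inv_anti₀ h2L0 hL1
      calc 1 / Real.sqrt n = Real.sqrt (1 / n) := by
            rw [one_div, one_div, Real.sqrt_inv]
      _ ≤ Real.sqrt (b ^ (2*k) * b ^ (2*k)) := Real.sqrt_le_sqrt h4
      _ = b ^ (2*k) := by rw [← sq, Real.sqrt_sq (by positivity)]
    have hγk : γ ^ k ≤ Real.sqrt 2 / Real.sqrt n := by
      have h5 : γ ^ k * γ ^ k ≤ 2 / n := by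
        have e1 : γ ^ k * γ ^ k = (γ ^ (2*K)) ^ L := by
          rw [← pow_add, ← pow_mul, hkdef]; ring_nf
        have e2 : (γ ^ (2*K)) ^ L ≤ ((1:ℝ)/2) ^ L :=
          pow_le_pow_left₀ (by positivity) hK L
        have e3 : ((1:ℝ)/2) ^ L ≤ 2 / n := by
          rw [div_pow, one_pow, div_le_div_iff₀ (by positivity) hn0]
          linarith [hL2]
        rw [e1]; exact e2.trans e3
      calc γ ^ k = Real.sqrt (γ ^ k * γ ^ k) := by
            rw [← sq, Real.sqrt_sq (by positivity)]
      _ ≤ Real.sqrt (2 / n) := Real.sqrt_le_sqrt h5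
      _ = Real.sqrt 2 / Real.sqrt n := Real.sqrt_div (by norm_num) _
    -- √n ≥ 2/(1-b)
    have hsqn : 2 / (1 - b) ≤ Real.sqrt n := by
      rw [Real.le_sqrt (by positivity) (by positivity)]
      have hN0n : (N0 : ℝ) ≤ n := by exact_mod_cast hbig
      calc (2 / (1 - b)) ^ 2 = 4 / (1-b)^2 := by rw [div_pow]; norm_num
      _ ≤ (N0:ℝ) := hN0
      _ ≤ n := hN0n
    -- t j ≥ 1 for j < k
    have htj : ∀ j < k, (1:ℝ) ≤ (n : ℝ) * b ^ (2 * j) * ((1 - b) / 2) := by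
      intro j hj
      have hb2k : b ^ (2*k) ≤ b ^ (2*j) :=
        pow_le_pow_of_le_one hb0.le hb1.le (by omega)
      have h6 : Real.sqrt n ≤ (n:ℝ) * b ^ (2*j) := by
        calc Real.sqrt n = (n:ℝ) * (1 / Real.sqrt n) := by
              rw [mul_one_div, Real.div_sqrt]
        _ ≤ (n:ℝ) * b ^ (2*k) := mul_le_mul_of_nonneg_left hbk (by positivity)
        _ ≤ (n:ℝ) * b ^ (2*j) := mul_le_mul_of_nonneg_left hb2k (by positivity)
      have h7 : (1:ℝ) ≤ Real.sqrt n * ((1-b)/2) := by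
        have := mul_le_mul_of_nonneg_right hsqn (by positivity : (0:ℝ) ≤ (1-b)/2)
        have he : 2 / (1 - b) * ((1-b)/2) = 1 := by field_simp
        linarith
      calc (1:ℝ) ≤ Real.sqrt n * ((1-b)/2) := h7
      _ ≤ (n:ℝ) * b ^ (2*j) * ((1 - b) / 2) :=
        mul_le_mul_of_nonneg_right h6 (by positivity)
    -- the sequence m
    set m : ℕ → ℕ := fun j => ⌊(n : ℝ) * b ^ (2 * j) * ((1 - b) / 2)⌋₊ with hmdef
    have hmle : ∀ j, (m j : ℝ) ≤ (n : ℝ) * b ^ (2 * j) * ((1 - b) / 2) := by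
      intro j; exact Nat.floor_le (by positivity)
    have hm1 : ∀ j < k, 1 ≤ m j := fun j hj => Nat.le_floor (by exact_mod_cast htj j hj)
    have hmhalf : ∀ j < k, ((n : ℝ) * b ^ (2 * j) * ((1 - b) / 2)) / 2 ≤ (m j : ℝ) :=
      fun j hj => half_le_floor (htj j hj)
    clear_value m
    clear hmdef
    -- sum of m ≤ n
    have hsum_m : (∑ j ∈ Finset.range k, m j) ≤ n := by
      have h8 : (∑ j ∈ Finset.range k, (m j : ℝ)) ≤ (n:ℝ) := by
        calc ∑ j ∈ Finset.range k, (m j : ℝ)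
            ≤ ∑ j ∈ Finset.range k, (n : ℝ) * b ^ (2 * j) * ((1 - b) / 2) :=
              Finset.sum_le_sum fun j _ => hmle j
        _ = (n:ℝ) * ((1-b)/2) * ∑ j ∈ Finset.range k, (b^2) ^ j := by
              rw [Finset.mul_sum]; apply Finset.sum_congr rfl; intro j _
              rw [← pow_mul]; ring
        _ ≤ (n:ℝ) * ((1-b)/2) * (1 / (1 - b^2)) := by
              apply mul_le_mul_of_nonneg_left
              · exact geom_range_le (by positivity) (by nlinarith) k
              · positivity
        _ ≤ (n:ℝ) := by
              have hb2 : (1:ℝ) - b^2 = (1-b)*(1+b) := by ring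
              have h1b2 : (0:ℝ) < (1-b)*(1+b) := by nlinarith
              rw [hb2, mul_one_div, div_le_iff₀ h1b2]
              have h12 : (1-b)/2 ≤ (1-b)*(1+b) := by nlinarith
              exact mul_le_mul_of_nonneg_left h12 hn0.le
      exact_mod_cast h8
    -- bound each integral term
    have hterm : ∀ j < k, (∫⁻ y, pT1 y (m j) ∂(μ x j)) ≤
        ENNReal.ofReal (A * (1 - b) * (γ/b) ^ j * ((|x| + 1) / Real.sqrt n)) := by
      intro j hj
      have hmj1 : 1 ≤ m j := hm1 j hj
      have hmj1R : (1:ℝ) ≤ (m j : ℝ) := by exact_mod_cast hmj1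
      have hsm : 0 < Real.sqrt (m j) := Real.sqrt_pos.mpr (by linarith)
      have hlow : b ^ j * Real.sqrt (1 - b) * Real.sqrt n / 2 ≤ Real.sqrt (m j) := by
        rw [Real.le_sqrt (by positivity) (by positivity)]
        calc (b ^ j * Real.sqrt (1 - b) * Real.sqrt n / 2) ^ 2
            = (b^j)^2 * (Real.sqrt (1-b))^2 * (Real.sqrt n)^2 / 4 := by ring
        _ = ((n : ℝ) * b ^ (2 * j) * ((1 - b) / 2)) / 2 := by
              rw [Real.sq_sqrt h1b.le, Real.sq_sqrt hn0.le, ← pow_mul]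
              ring
        _ ≤ (m j : ℝ) := hmhalf j hj
      calc (∫⁻ y, pT1 y (m j) ∂(μ x j))
          ≤ ∫⁻ y, ENNReal.ofReal (c * (|y| + 1) / Real.sqrt (m j)) ∂(μ x j) :=
            lintegral_mono fun y => hT1 y (m j) hmj1
      _ = ∫⁻ y, ENNReal.ofReal (c / Real.sqrt (m j)) * ENNReal.ofReal (|y| + 1) ∂(μ x j) := by
            apply lintegral_congr; intro y
            rw [← ENNReal.ofReal_mul (by positivity)]
            congr 1; field_simp
      _ = ENNReal.ofReal (c / Real.sqrt (m j)) * ∫⁻ y, ENNReal.ofReal (|y| + 1) ∂(μ x j) :=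
            lintegral_const_mul' _ _ ENNReal.ofReal_ne_top
      _ ≤ ENNReal.ofReal (c / Real.sqrt (m j)) * ENNReal.ofReal (c * γ ^ j * (|x| + 1)) :=
            mul_le_mul_right (hH x j) _
      _ = ENNReal.ofReal ((c / Real.sqrt (m j)) * (c * γ ^ j * (|x| + 1))) := by
            rw [← ENNReal.ofReal_mul (by positivity)]
      _ ≤ ENNReal.ofReal (A * (1 - b) * (γ/b) ^ j * ((|x| + 1) / Real.sqrt n)) := by
            apply ENNReal.ofReal_le_ofReal
            have hdiv : c / Real.sqrt (m j) ≤ c / (b ^ j * Real.sqrt (1 - b) * Real.sqrt n / 2) :=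
              div_le_div_of_nonneg_left hc.le (by positivity) hlow
            have h10 : (c / Real.sqrt (m j)) * (c * γ ^ j * (|x| + 1)) ≤
                (c / (b ^ j * Real.sqrt (1 - b) * Real.sqrt n / 2)) * (c * γ ^ j * (|x| + 1)) :=
              mul_le_mul_of_nonneg_right hdiv (by positivity)
            refine h10.trans (le_of_eq ?_)
            rw [hAdef, div_pow]
            have hbj : (b:ℝ) ^ j ≠ 0 := by positivity
            have hs1b : Real.sqrt (1-b) ≠ 0 := by positivity
            field_simp
    -- assemble
    refine (hdecomp x n k m hsum_m).trans ?_
    have hsum : (∑ j ∈ Finset.range k, ∫⁻ y, pT1 y (m j) ∂(μ x j)) ≤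
        ENNReal.ofReal (A * ((|x| + 1) / Real.sqrt n)) := by
      calc (∑ j ∈ Finset.range k, ∫⁻ y, pT1 y (m j) ∂(μ x j))
          ≤ ∑ j ∈ Finset.range k,
              ENNReal.ofReal (A * (1 - b) * (γ/b) ^ j * ((|x| + 1) / Real.sqrt n)) :=
            Finset.sum_le_sum fun j hj => hterm j (Finset.mem_range.mp hj)
      _ = ENNReal.ofReal (∑ j ∈ Finset.range k,
              A * (1 - b) * (γ/b) ^ j * ((|x| + 1) / Real.sqrt n)) :=
            (ENNReal.ofReal_sum_of_nonneg fun j _ => by positivity).symm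
      _ ≤ ENNReal.ofReal (A * ((|x| + 1) / Real.sqrt n)) := by
            apply ENNReal.ofReal_le_ofReal
            calc ∑ j ∈ Finset.range k, A * (1 - b) * (γ/b) ^ j * ((|x| + 1) / Real.sqrt n)
                = A * (1 - b) * ((|x| + 1) / Real.sqrt n) * ∑ j ∈ Finset.range k, (γ/b) ^ j := by
                  rw [Finset.mul_sum]; apply Finset.sum_congr rfl; intro j _; ring
            _ ≤ A * (1 - b) * ((|x| + 1) / Real.sqrt n) * (1 / (1 - b)) := by
                  apply mul_le_mul_of_nonneg_left _ (by positivity)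
                  calc ∑ j ∈ Finset.range k, (γ/b) ^ j
                      ≤ ∑ j ∈ Finset.range k, b ^ j :=
                        Finset.sum_le_sum fun j _ => pow_le_pow_left₀ (by positivity) hγbb j
                  _ ≤ 1 / (1 - b) := geom_range_le hb0.le hb1 k
            _ = A * ((|x| + 1) / Real.sqrt n) := by field_simp
    have hfirst : μ x k Set.univ ≤ ENNReal.ofReal (Real.sqrt 2 * c * ((|x| + 1) / Real.sqrt n)) := by
      refine (hC1 x k).trans (ENNReal.ofReal_le_ofReal ?_)
      have h9 : c * γ ^ k ≤ c * (Real.sqrt 2 / Real.sqrt n) :=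
        mul_le_mul_of_nonneg_left hγk hc.le
      refine h9.trans ?_
      calc c * (Real.sqrt 2 / Real.sqrt n) = Real.sqrt 2 * c * (1 / Real.sqrt n) := by ring
      _ ≤ Real.sqrt 2 * c * ((|x| + 1) / Real.sqrt n) := by gcongr
    calc μ x k Set.univ + ∑ j ∈ Finset.range k, ∫⁻ y, pT1 y (m j) ∂(μ x j)
        ≤ ENNReal.ofReal (Real.sqrt 2 * c * ((|x| + 1) / Real.sqrt n)) +
          ENNReal.ofReal (A * ((|x| + 1) / Real.sqrt n)) := add_le_add hfirst hsum
    _ = ENNReal.ofReal ((Real.sqrt 2 * c + A) * ((|x| + 1) / Real.sqrt n)) := by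
          rw [← ENNReal.ofReal_add (by positivity) (by positivity)]; ring_nf
    _ ≤ ENNReal.ofReal ((Real.sqrt N0 + Real.sqrt 2 * c + A + 1) * (|x| + 1) / Real.sqrt n) := by
          apply ENNReal.ofReal_le_ofReal
          rw [mul_div_assoc]
          apply mul_le_mul_of_nonneg_right _ (by positivity)
          have := Real.sqrt_nonneg (N0:ℝ)
          linarith
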